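/- Let X₁, X₂, … be i.i.d. nonnegative random variables with common distribution μ, fix θ > 0 with F(θ) = μ((-∞,θ]) > 0, and let N(ω) = inf{ i ≥ 1 : X_i(ω) ≤ θ }. Then the total time until the first successful reception, Y = θ·(N − 1) + X_N (set to 0 on the null event {N = ∞}), is integrable and E[Y] = ( θ − ∫_0^θ F(x) dx ) / F(θ), where ∫_0^θ F(x) dx is the Lebesgue integral of the CDF over [0,θ]. -/

import Mathlib

open MeasureTheory ProbabilityTheory

lemma cdf_int {μ : Measure ℝ} [IsProbabilityMeasure μ] (hnonneg : μ (Set.Iio 0) = 0)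
    {θ : ℝ} (hθ : 0 < θ) :
    ∫ x in Set.Icc 0 θ, (μ (Set.Iic x)).toReal
      = θ * (μ (Set.Iic θ)).toReal - ∫ x in Set.Iic θ, x ∂μ := by
  have hae : ∀ᵐ y ∂μ, 0 ≤ y := by
    rw [ae_iff]
    simp only [not_le]; exact hnonneg
  have hmono : Monotone fun x : ℝ => μ (Set.Iic x) :=
    fun a b hab => measure_mono (Set.Iic_subset_Iic.2 hab)
  have hmeasF : Measurable fun x : ℝ => μ (Set.Iic x) := hmono.measurable
  have hr1 : ∀ᵐ y ∂μ.restrict (Set.Iic θ), y ≤ θ := by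
    filter_upwards [ae_restrict_mem measurableSet_Iic] with y hy using hy
  have hr0 : ∀ᵐ y ∂μ.restrict (Set.Iic θ), (0:ℝ) ≤ y := ae_restrict_of_ae hae
  have hint_id : Integrable (fun y : ℝ => y) (μ.restrict (Set.Iic θ)) := by
    refine Integrable.mono' (integrable_const θ) measurable_id.aestronglyMeasurable ?_
    filter_upwards [hr0, hr1] with y h0 h1
    rw [Real.norm_eq_abs, abs_le]; constructor <;> linarith
  have hint_sub : Integrable (fun y : ℝ => θ - y) (μ.restrict (Set.Iic θ)) :=
    (integrable_const θ).sub hint_id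
  have hsub_nn : 0 ≤ᵐ[μ.restrict (Set.Iic θ)] fun y : ℝ => θ - y := by
    filter_upwards [hr1] with y h1
    simp only [Pi.zero_apply]
    linarith
  -- step 1: toReal
  have h1 : ∫ x in Set.Icc 0 θ, (μ (Set.Iic x)).toReal
      = (∫⁻ x in Set.Icc 0 θ, μ (Set.Iic x)).toReal := by
    rw [integral_toReal hmeasF.aemeasurable]
    filter_upwards with x using measure_lt_top μ _
  -- step 2: Tonelli
  set f : ℝ × ℝ → ENNReal := fun p => if p.2 ≤ p.1 then 1 else 0 with hf
  have hfm : Measurable f :=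
    Measurable.ite (measurableSet_le measurable_snd measurable_fst)
      measurable_const measurable_const
  have h2 : ∫⁻ x in Set.Icc 0 θ, μ (Set.Iic x)
      = ∫⁻ y, ∫⁻ x in Set.Icc 0 θ, f (x, y) ∂(volume : Measure ℝ) ∂μ := by
    rw [← lintegral_lintegral_swap]
    · refine lintegral_congr fun x => ?_
      have hpt : ∀ y : ℝ, f (x, y) = (Set.Iic x).indicator (fun _ => (1:ENNReal)) y := by
        intro y; simp [hf, Set.indicator_apply]
      simp_rw [hpt]
      rw [lintegral_indicator measurableSet_Iic]
      simp
    · exact hfm.aemeasurable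
  have h3 : ∀ y : ℝ, ∫⁻ x in Set.Icc 0 θ, f (x, y) ∂(volume : Measure ℝ)
      = volume (Set.Ici y ∩ Set.Icc 0 θ) := by
    intro y
    have hpt : ∀ x : ℝ, f (x, y) = (Set.Ici y).indicator (fun _ => (1:ENNReal)) x := by
      intro x; simp [hf, Set.indicator_apply]
    simp_rw [hpt]
    rw [lintegral_indicator measurableSet_Ici]
    simp [Measure.restrict_restrict measurableSet_Ici]
  have h4 : ∫⁻ y, volume (Set.Ici y ∩ Set.Icc 0 θ) ∂μ
      = ∫⁻ y, ENNReal.ofReal (θ - y) ∂μ := by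
    refine lintegral_congr_ae ?_
    filter_upwards [hae] with y h0
    have hset : Set.Ici y ∩ Set.Icc 0 θ = Set.Icc y θ := by
      ext x
      simp only [Set.mem_inter_iff, Set.mem_Ici, Set.mem_Icc]
      constructor
      · rintro ⟨ha, _, hc⟩; exact ⟨ha, hc⟩
      · rintro ⟨ha, hb⟩; exact ⟨ha, le_trans h0 ha, hb⟩
    rw [hset, Real.volume_Icc]
  have h5 : ∫⁻ y, ENNReal.ofReal (θ - y) ∂μ
      = ∫⁻ y in Set.Iic θ, ENNReal.ofReal (θ - y) ∂μ := by
    have hpt : (fun y : ℝ => ENNReal.ofReal (θ - y))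
        = (Set.Iic θ).indicator (fun y => ENNReal.ofReal (θ - y)) := by
      ext y
      by_cases hy : y ≤ θ
      · simp [Set.indicator_apply, hy]
      · simp only [Set.indicator_apply, Set.mem_Iic, hy, if_false]
        rw [ENNReal.ofReal_eq_zero]
        have : θ < y := lt_of_not_ge hy
        linarith
    rw [← lintegral_indicator measurableSet_Iic]
    exact lintegral_congr fun y => congrFun hpt y
  have h6 : ∫⁻ y in Set.Iic θ, ENNReal.ofReal (θ - y) ∂μ
      = ENNReal.ofReal (∫ y in Set.Iic θ, (θ - y) ∂μ) :=
    (ofReal_integral_eq_lintegral_ofReal hint_sub hsub_nn).symm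
  have h7 : ∫ y in Set.Iic θ, (θ - y) ∂μ
      = θ * (μ (Set.Iic θ)).toReal - ∫ x in Set.Iic θ, x ∂μ := by
    rw [integral_sub (integrable_const θ) hint_id, integral_const]
    simp [mul_comm, measureReal_def]
  have hnn : 0 ≤ ∫ y in Set.Iic θ, (θ - y) ∂μ := integral_nonneg_of_ae hsub_nn
  rw [h1, h2]
  simp_rw [h3]
  rw [h4, h5, h6, ENNReal.toReal_ofReal hnn, h7]

open ProbabilityTheory

open Classical in
/-- For i.i.d. nonnegative service times `X i` with law `μ`, a fixed threshold
`θ > 0` with `F(θ) = μ((-∞,θ]) > 0`, and `N ω = inf {i ≥ 1 : X i ω ≤ θ}`, the total time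
`Y = θ (N - 1) + X_N` until the first successful reception (set to `0` on the null event
`{N = ∞}`) is integrable with `E[Y] = (θ - ∫_0^θ F(x) dx) / F(θ)`, where `∫_0^θ F(x) dx` is the
Lebesgue integral of the CDF `F(x) = μ((-∞,x])` over `[0,θ]`. -/
theorem stmt_4
    {Ω : Type*} [MeasurableSpace Ω] (P : Measure Ω) [IsProbabilityMeasure P]
    (X : ℕ → Ω → ℝ) (hmeas : ∀ i, Measurable (X i))
    (hindep : iIndepFun X P)
    (μ : Measure ℝ) [IsProbabilityMeasure μ]
    (hdist : ∀ i, Measure.map (X i) P = μ)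
    (hnonneg : μ (Set.Iio 0) = 0)
    (θ : ℝ) (hθ : 0 < θ) (hF : 0 < μ (Set.Iic θ))
    (N : Ω → ℕ) (hN : ∀ ω, N ω = sInf {i : ℕ | 1 ≤ i ∧ X i ω ≤ θ})
    (Y : Ω → ℝ)
    (hY : ∀ ω, Y ω = if ∃ i, 1 ≤ i ∧ X i ω ≤ θ
        then θ * ((N ω : ℝ) - 1) + X (N ω) ω else 0) :
    Integrable Y P ∧
      ∫ ω, Y ω ∂P
        = (θ - ∫ x in Set.Icc 0 θ, (μ (Set.Iic x)).toReal) / (μ (Set.Iic θ)).toReal := by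
  classical
  -- scalars
  set p : ℝ := (μ (Set.Iic θ)).toReal with hp_def
  set q : ℝ := (μ (Set.Ioi θ)).toReal with hq_def
  have hIic_ne_top : μ (Set.Iic θ) ≠ ⊤ := (measure_lt_top μ _).ne
  have hIoi_ne_top : μ (Set.Ioi θ) ≠ ⊤ := (measure_lt_top μ _).ne
  have hp_pos : 0 < p := ENNReal.toReal_pos hF.ne' hIic_ne_top
  have hq_nonneg : 0 ≤ q := ENNReal.toReal_nonneg
  have hpq : p + q = 1 := by
    have hsum : μ (Set.Iic θ) + μ (Set.Ioi θ) = 1 := by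
      rw [← measure_union (Set.Iic_disjoint_Ioi le_rfl) measurableSet_Ioi,
        Set.Iic_union_Ioi, measure_univ]
    rw [hp_def, hq_def, ← ENNReal.toReal_add hIic_ne_top hIoi_ne_top, hsum, ENNReal.toReal_one]
  have hq_lt : q < 1 := by linarith
  -- nonnegativity a.e.
  have hae : ∀ᵐ y ∂μ, 0 ≤ y := by
    rw [ae_iff]
    simp only [not_le]; exact hnonneg
  set m : ℝ := ∫ x in Set.Iic θ, x ∂μ with hm_def
  have hr1 : ∀ᵐ y ∂μ.restrict (Set.Iic θ), y ≤ θ := by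
    filter_upwards [ae_restrict_mem measurableSet_Iic] with y hy using hy
  have hr0 : ∀ᵐ y ∂μ.restrict (Set.Iic θ), (0:ℝ) ≤ y := ae_restrict_of_ae hae
  have hint_id : Integrable (fun y : ℝ => y) (μ.restrict (Set.Iic θ)) := by
    refine Integrable.mono' (integrable_const θ) measurable_id.aestronglyMeasurable ?_
    filter_upwards [hr0, hr1] with y h0 h1
    rw [Real.norm_eq_abs, abs_le]; constructor <;> linarith
  have hm_nonneg : 0 ≤ m := integral_nonneg_of_ae hr0
  -- laws
  have hXlaw : ∀ i (s : Set ℝ), MeasurableSet s → P (X i ⁻¹' s) = μ s := by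
    intro i s hs
    rw [← hdist i, Measure.map_apply (hmeas i) hs]
  have hXae : ∀ i, ∀ᵐ ω ∂P, 0 ≤ X i ω := by
    intro i
    rw [ae_iff]
    have hpre := hXlaw i (Set.Iio 0) measurableSet_Iio
    simp only [not_le]
    rw [show {ω | X i ω < 0} = X i ⁻¹' Set.Iio 0 from rfl, hpre, hnonneg]
  -- building blocks
  set φ : ℝ → ℝ := fun x => if θ < x then 1 else 0 with hφ
  set ψ : ℕ → ℝ → ℝ := fun n x => if x ≤ θ then θ * n + x else 0 with hψ
  have hφm : Measurable φ :=
    Measurable.ite measurableSet_Ioi measurable_const measurable_const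
  have hψm : ∀ n, Measurable (ψ n) := fun n =>
    Measurable.ite measurableSet_Iic (measurable_const.add measurable_id) measurable_const
  set Z : ℕ → Ω → ℝ := fun n ω => ∏ i ∈ Finset.Ico 1 (n+1), φ (X i ω) with hZ
  set W : ℕ → Ω → ℝ := fun n ω => ψ n (X (n+1) ω) with hW
  have hZm : ∀ n, Measurable (Z n) := fun n =>
    Finset.measurable_prod _ fun i _ => hφm.comp (hmeas i)
  have hWm : ∀ n, Measurable (W n) := fun n => (hψm n).comp (hmeas (n+1))
  -- characterization of N
  have hchar : ∀ (n : ℕ) ω, N ω = n + 1 ↔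
      ((∀ i ∈ Finset.Ico 1 (n+1), θ < X i ω) ∧ X (n+1) ω ≤ θ) := by
    intro n ω
    rw [hN ω]
    constructor
    · intro h
      have hne : {i : ℕ | 1 ≤ i ∧ X i ω ≤ θ}.Nonempty := by
        by_contra hcon
        rw [Set.not_nonempty_iff_eq_empty] at hcon
        rw [hcon, Nat.sInf_empty] at h
        exact Nat.succ_ne_zero n h.symm
      have hmem := Nat.sInf_mem hne
      rw [h] at hmem
      refine ⟨fun i hi => ?_, hmem.2⟩
      rw [Finset.mem_Ico] at hi
      have hnotmem : i ∉ {i : ℕ | 1 ≤ i ∧ X i ω ≤ θ} :=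
        Nat.notMem_of_lt_sInf (by rw [h]; exact hi.2)
      exact lt_of_not_ge fun hc => hnotmem ⟨hi.1, hc⟩
    · rintro ⟨hall, hle⟩
      have hmem : n + 1 ∈ {i : ℕ | 1 ≤ i ∧ X i ω ≤ θ} :=
        ⟨Nat.succ_le_succ (Nat.zero_le n), hle⟩
      refine le_antisymm (Nat.sInf_le hmem) ?_
      by_contra hcon
      push_neg at hcon
      have hmem' := Nat.sInf_mem ⟨_, hmem⟩
      have hIco : sInf {i : ℕ | 1 ≤ i ∧ X i ω ≤ θ} ∈ Finset.Ico 1 (n+1) :=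
        Finset.mem_Ico.mpr ⟨hmem'.1, hcon⟩
      exact absurd hmem'.2 (not_le.mpr (hall _ hIco))
  have hchar0 : ∀ ω, N ω = 0 ↔ ¬∃ i, 1 ≤ i ∧ X i ω ≤ θ := by
    intro ω
    rw [hN ω]
    constructor
    · intro h hex
      obtain ⟨i, hi⟩ := hex
      have hmem := Nat.sInf_mem (⟨i, hi⟩ : {i : ℕ | 1 ≤ i ∧ X i ω ≤ θ}.Nonempty)
      rw [h] at hmem
      exact absurd hmem.1 (by norm_num)
    · intro h
      have hempty : {i : ℕ | 1 ≤ i ∧ X i ω ≤ θ} = ∅ := by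
        ext i
        simp only [Set.mem_setOf_eq, Set.mem_empty_iff_false, iff_false]
        exact fun hi => h ⟨i, hi⟩
      rw [hempty, Nat.sInf_empty]
  -- product formula
  have hFchar : ∀ (n : ℕ) ω,
      Z n ω * W n ω = if N ω = n + 1 then θ * n + X (n+1) ω else 0 := by
    intro n ω
    by_cases h : N ω = n + 1
    · rw [if_pos h]
      obtain ⟨hall, hle⟩ := (hchar n ω).mp h
      have hZ1 : Z n ω = 1 :=
        Finset.prod_eq_one fun i hi => if_pos (hall i hi)
      have hW1 : W n ω = θ * n + X (n+1) ω := if_pos hle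
      rw [hZ1, hW1, one_mul]
    · rw [if_neg h]
      by_cases hA : ∀ i ∈ Finset.Ico 1 (n+1), θ < X i ω
      · have hB : ¬ X (n+1) ω ≤ θ := fun hb => h ((hchar n ω).mpr ⟨hA, hb⟩)
        have hW0 : W n ω = 0 := if_neg hB
        rw [hW0, mul_zero]
      · push_neg at hA
        obtain ⟨i, hi, hle⟩ := hA
        have hZ0 : Z n ω = 0 :=
          Finset.prod_eq_zero hi (if_neg (not_lt.mpr hle))
        rw [hZ0, zero_mul]
  -- Y as a tsum
  have hYt : ∀ ω, Y ω = ∑' n, Z n ω * W n ω := by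
    intro ω
    by_cases hE : ∃ i, 1 ≤ i ∧ X i ω ≤ θ
    · have hNpos : 1 ≤ N ω := by
        rw [hN ω]
        exact (Nat.sInf_mem (hE : {i : ℕ | 1 ≤ i ∧ X i ω ≤ θ}.Nonempty)).1
      obtain ⟨n₀, hn₀⟩ : ∃ n₀, N ω = n₀ + 1 :=
        ⟨N ω - 1, (Nat.succ_pred_eq_of_pos hNpos).symm⟩
      rw [hY ω, if_pos hE, tsum_eq_single n₀ ?_]
      · rw [hFchar n₀ ω, if_pos hn₀, hn₀]
        push_cast
        ring
      · intro n hn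
        rw [hFchar n ω, if_neg fun hc => hn (by omega)]
    · rw [hY ω, if_neg hE]
      have hz : ∀ n, Z n ω * W n ω = 0 := by
        intro n
        rw [hFchar n ω, if_neg]
        intro hc
        obtain ⟨_, hle⟩ := (hchar n ω).mp hc
        exact hE ⟨n+1, Nat.succ_le_succ (Nat.zero_le n), hle⟩
      simp [hz]
  -- pointwise nonnegativity / bounds
  have hZ_nn : ∀ n ω, 0 ≤ Z n ω := by
    intro n ω
    refine Finset.prod_nonneg fun i _ => ?_
    by_cases h : θ < X i ω
    · rw [hφ]; simp [h]
    · rw [hφ]; simp [h]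
  have hZ_le1 : ∀ n ω, Z n ω ≤ 1 := by
    intro n ω
    refine Finset.prod_le_one (fun i _ => ?_) fun i _ => ?_
    · by_cases h : θ < X i ω
      · rw [hφ]; simp [h]
      · rw [hφ]; simp [h]
    · by_cases h : θ < X i ω
      · rw [hφ]; simp [h]
      · rw [hφ]; simp [h]
  have hW_nn : ∀ n, ∀ᵐ ω ∂P, 0 ≤ W n ω := by
    intro n
    filter_upwards [hXae (n+1)] with ω h0
    rw [hW]
    dsimp only
    rw [hψ]
    dsimp only
    split_ifs with h
    · have := mul_nonneg hθ.le (Nat.cast_nonneg (α := ℝ) n)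
      linarith
    · exact le_refl 0
  -- integrability
  have hZint : ∀ n, Integrable (Z n) P := by
    intro n
    refine Integrable.mono' (integrable_const 1) (hZm n).aestronglyMeasurable ?_
    filter_upwards with ω
    rw [Real.norm_eq_abs, abs_le]
    exact ⟨by linarith [hZ_nn n ω], hZ_le1 n ω⟩
  have hWint : ∀ n, Integrable (W n) P := by
    intro n
    refine Integrable.mono' (integrable_const (θ * n + θ)) (hWm n).aestronglyMeasurable ?_
    filter_upwards [hXae (n+1)] with ω h0
    rw [Real.norm_eq_abs, abs_le]
    rw [hW]; dsimp only; rw [hψ]; dsimp only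
    have hθn : 0 ≤ θ * n := mul_nonneg hθ.le (Nat.cast_nonneg n)
    split_ifs with h
    · constructor <;> linarith
    · constructor <;> linarith
  -- independence
  have hindepZW : ∀ n, IndepFun (Z n) (W n) P := by
    intro n
    set G : ℕ → ℝ → ℝ := fun i => if i = n + 1 then ψ n else φ with hG
    have hGm : ∀ i, Measurable (G i) := by
      intro i
      rw [hG]
      dsimp only
      split_ifs
      · exact hψm n
      · exact hφm
    have h := (hindep.comp G hGm).indepFun_finsetProd_of_notMem
      (fun i => (hGm i).comp (hmeas i)) (s := Finset.Ico 1 (n+1)) (i := n+1)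
      (by simp)
    have hZeq : Z n = ∏ j ∈ Finset.Ico 1 (n+1), (fun i => G i ∘ X i) j := by
      funext ω
      rw [Finset.prod_apply]
      refine Finset.prod_congr rfl fun j hj => ?_
      have hjne : j ≠ n + 1 := by
        rw [Finset.mem_Ico] at hj
        omega
      simp [hG, hjne, Function.comp]
    have hWeq : W n = (fun i => G i ∘ X i) (n+1) := by
      funext ω
      simp [hG, hW, Function.comp]
    rw [hZeq, hWeq]
    exact h
  -- expectation of Z n
  have hZval : ∀ n, ∫ ω, Z n ω ∂P = q ^ n := by
    intro n
    have hsetm : MeasurableSet (⋂ i ∈ Finset.Ico 1 (n+1), X i ⁻¹' Set.Ioi θ) :=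
      Finset.measurableSet_biInter _ fun i _ => (hmeas i) measurableSet_Ioi
    have hZind : Z n = Set.indicator (⋂ i ∈ Finset.Ico 1 (n+1), X i ⁻¹' Set.Ioi θ)
        (fun _ => (1:ℝ)) := by
      funext ω
      by_cases h : ω ∈ ⋂ i ∈ Finset.Ico 1 (n+1), X i ⁻¹' Set.Ioi θ
      · rw [Set.indicator_of_mem h]
        refine Finset.prod_eq_one fun i hi => ?_
        have hmem : X i ω ∈ Set.Ioi θ := Set.mem_iInter₂.mp h i hi
        exact if_pos hmem
      · rw [Set.indicator_of_notMem h]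
        rw [Set.mem_iInter₂] at h
        push_neg at h
        obtain ⟨i, hi, hnotin⟩ := h
        exact Finset.prod_eq_zero hi (if_neg (by simpa using hnotin))
    rw [hZind, integral_indicator hsetm, setIntegral_const, measureReal_def,
      hindep.measure_inter_preimage_eq_mul (Finset.Ico 1 (n+1))
        (sets := fun _ => Set.Ioi θ) (fun i _ => measurableSet_Ioi)]
    have hprod : ∏ i ∈ Finset.Ico 1 (n+1), P (X i ⁻¹' Set.Ioi θ) = μ (Set.Ioi θ) ^ n := by
      rw [Finset.prod_congr rfl fun i _ => hXlaw i _ measurableSet_Ioi,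
        Finset.prod_const, Nat.card_Ico]
      norm_num
    rw [hprod, ENNReal.toReal_pow, smul_eq_mul, mul_one]
  -- expectation of W n
  have hWval : ∀ n, ∫ ω, W n ω ∂P = θ * n * p + m := by
    intro n
    have hmap := integral_map (φ := X (n+1)) (μ := P) (f := ψ n)
      (hmeas (n+1)).aemeasurable
      (by rw [hdist]; exact (hψm n).aestronglyMeasurable)
    rw [hdist] at hmap
    have hWe : ∫ ω, W n ω ∂P = ∫ x, ψ n x ∂μ := hmap.symm
    have hind : ψ n = Set.indicator (Set.Iic θ) (fun x => θ * n + x) := by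
      funext x
      rw [Set.indicator_apply]
      simp only [Set.mem_Iic, hψ]
    rw [hWe, hind, integral_indicator measurableSet_Iic,
      integral_add (integrable_const _) hint_id, integral_const,
      measureReal_restrict_apply_univ, measureReal_def, smul_eq_mul, ← hm_def, ← hp_def]
    ring
  -- value of each term
  have hFval : ∀ n, ∫ ω, Z n ω * W n ω ∂P = q ^ n * (θ * n * p + m) := by
    intro n
    have h := (hindepZW n).integral_mul_eq_mul_integral (hZint n).aestronglyMeasurable (hWint n).aestronglyMeasurable
    calc ∫ ω, Z n ω * W n ω ∂P = ∫ ω, (Z n * W n) ω ∂P := by rfl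
    _ = (∫ ω, Z n ω ∂P) * ∫ ω, W n ω ∂P := h
    _ = q ^ n * (θ * n * p + m) := by rw [hZval n, hWval n]
  have hFint : ∀ n, Integrable (fun ω => Z n ω * W n ω) P := fun n =>
    (hindepZW n).integrable_mul (hZint n) (hWint n)
  have hF_nn : ∀ n, ∀ᵐ ω ∂P, 0 ≤ Z n ω * W n ω := by
    intro n
    filter_upwards [hW_nn n] with ω h0
    exact mul_nonneg (hZ_nn n ω) h0
  -- lintegral of norms
  have hFlint : ∀ n, ∫⁻ ω, ‖Z n ω * W n ω‖₊ ∂P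
      = ENNReal.ofReal (q ^ n * (θ * n * p + m)) := by
    intro n
    rw [show ∫⁻ ω, (‖Z n ω * W n ω‖₊ : ENNReal) ∂P = ∫⁻ ω, ‖Z n ω * W n ω‖ₑ ∂P from rfl,
      ← ofReal_integral_norm_eq_lintegral_enorm (hFint n)]
    congr 1
    rw [← hFval n]
    refine integral_congr_ae ?_
    filter_upwards [hF_nn n] with ω h0
    exact Real.norm_of_nonneg h0
  have hterm_nn : ∀ n : ℕ, 0 ≤ q ^ n * (θ * n * p + m) := by
    intro n
    have hθn : 0 ≤ θ * n * p :=
      mul_nonneg (mul_nonneg hθ.le (Nat.cast_nonneg n)) hp_pos.le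
    exact mul_nonneg (pow_nonneg hq_nonneg n) (by linarith)
  have hqnorm : ‖q‖ < 1 := by rwa [Real.norm_eq_abs, abs_of_nonneg hq_nonneg]
  have hsum1 : Summable (fun n : ℕ => (n:ℝ) * q ^ n) := by
    have := summable_pow_mul_geometric_of_norm_lt_one 1 hqnorm
    simpa using this
  have hsum2 : Summable (fun n : ℕ => q ^ n) :=
    summable_geometric_of_lt_one hq_nonneg hq_lt
  have hsummable : Summable (fun n : ℕ => q ^ n * (θ * n * p + m)) := by
    refine Summable.congr ((hsum1.mul_left (θ * p)).add (hsum2.mul_left m)) fun n => ?_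
    ring
  have htsum_ne_top : ∑' n, ∫⁻ ω, ‖Z n ω * W n ω‖₊ ∂P ≠ ⊤ := by
    simp_rw [hFlint]
    rw [← ENNReal.ofReal_tsum_of_nonneg hterm_nn hsummable]
    exact ENNReal.ofReal_ne_top
  -- tsum value
  have hts : ∑' n : ℕ, q ^ n * (θ * n * p + m) = (θ * q + m) / p := by
    have h1 : ∑' n : ℕ, (n:ℝ) * q ^ n = q / (1 - q) ^ 2 :=
      tsum_coe_mul_geometric_of_norm_lt_one hqnorm
    have h2 : ∑' n : ℕ, q ^ n = (1 - q)⁻¹ :=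
      tsum_geometric_of_lt_one hq_nonneg hq_lt
    have h1p : 1 - q = p := by linarith
    calc ∑' n : ℕ, q ^ n * (θ * n * p + m)
        = ∑' n : ℕ, (θ * p * ((n:ℝ) * q ^ n) + m * q ^ n) :=
          tsum_congr fun n => by ring
      _ = θ * p * (q / (1 - q) ^ 2) + m * (1 - q)⁻¹ := by
          rw [Summable.tsum_add (hsum1.mul_left _) (hsum2.mul_left _),
            tsum_mul_left, tsum_mul_left, h1, h2]
      _ = (θ * q + m) / p := by
          rw [h1p]
          field_simp
  -- measurability of Y
  have hEset : MeasurableSet {ω | ∃ i, 1 ≤ i ∧ X i ω ≤ θ} := by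
    have hset : {ω | ∃ i, 1 ≤ i ∧ X i ω ≤ θ}
        = ⋃ i, ({ω | 1 ≤ i} ∩ {ω | X i ω ≤ θ}) := by
      ext ω
      simp [Set.mem_iUnion, Set.mem_inter_iff]
    rw [hset]
    exact MeasurableSet.iUnion fun i =>
      (MeasurableSet.const _).inter ((hmeas i) measurableSet_Iic)
  have hNm : Measurable N := by
    refine measurable_to_countable' fun n => ?_
    match n with
    | 0 =>
      have hset : N ⁻¹' {0} = {ω | ∃ i, 1 ≤ i ∧ X i ω ≤ θ}ᶜ := by
        ext ω
        simp only [Set.mem_preimage, Set.mem_singleton_iff, Set.mem_compl_iff,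
          Set.mem_setOf_eq]
        exact hchar0 ω
      rw [hset]
      exact hEset.compl
    | Nat.succ k =>
      have hset : N ⁻¹' {k+1}
          = (⋂ i ∈ Finset.Ico 1 (k+1), X i ⁻¹' Set.Ioi θ) ∩ X (k+1) ⁻¹' Set.Iic θ := by
        ext ω
        simp only [Set.mem_preimage, Set.mem_singleton_iff, Set.mem_inter_iff,
          Set.mem_iInter, Set.mem_Ioi, Set.mem_Iic]
        exact (hchar k ω).trans (by tauto)
      rw [hset]
      exact (Finset.measurableSet_biInter _ fun i _ => (hmeas i) measurableSet_Ioi).inter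
        ((hmeas (k+1)) measurableSet_Iic)
  have hXN : Measurable fun ω => X (N ω) ω := by
    have hrepr : (fun ω => X (N ω) ω)
        = (fun pr : Ω × ℕ => X pr.2 pr.1) ∘ fun ω => (ω, N ω) := rfl
    rw [hrepr]
    exact (measurable_from_prod_countable_left fun n => hmeas n).comp
      (measurable_id.prodMk hNm)
  have hYmeas : Measurable Y := by
    have hrepr : Y = fun ω => if ω ∈ {ω | ∃ i, 1 ≤ i ∧ X i ω ≤ θ}
        then θ * ((N ω : ℝ) - 1) + X (N ω) ω else 0 := funext fun ω => hY ω
    rw [hrepr]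
    refine Measurable.ite hEset ?_ measurable_const
    exact (measurable_const.mul (((measurable_of_countable _).comp hNm).sub
      measurable_const)).add hXN
  -- lintegral of ‖Y‖
  have hYnorm : ∀ ω, (‖Y ω‖₊ : ENNReal) = ∑' n, (‖Z n ω * W n ω‖₊ : ENNReal) := by
    intro ω
    by_cases hE : ∃ i, 1 ≤ i ∧ X i ω ≤ θ
    · have hNpos : 1 ≤ N ω := by
        rw [hN ω]
        exact (Nat.sInf_mem (hE : {i : ℕ | 1 ≤ i ∧ X i ω ≤ θ}.Nonempty)).1
      obtain ⟨n₀, hn₀⟩ : ∃ n₀, N ω = n₀ + 1 :=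
        ⟨N ω - 1, (Nat.succ_pred_eq_of_pos hNpos).symm⟩
      rw [tsum_eq_single n₀ ?_]
      · congr 1
        rw [hY ω, if_pos hE, hFchar n₀ ω, if_pos hn₀, hn₀]
        push_cast
        ring_nf
      · intro n hn
        rw [hFchar n ω, if_neg fun hc => hn (by omega)]
        simp
    · have hz : ∀ n, Z n ω * W n ω = 0 := by
        intro n
        rw [hFchar n ω, if_neg]
        intro hc
        obtain ⟨_, hle⟩ := (hchar n ω).mp hc
        exact hE ⟨n+1, Nat.succ_le_succ (Nat.zero_le n), hle⟩
      rw [hY ω, if_neg hE]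
      simp [hz]
  have hYlint : ∫⁻ ω, ‖Y ω‖₊ ∂P = ∑' n, ∫⁻ ω, ‖Z n ω * W n ω‖₊ ∂P := by
    calc ∫⁻ ω, ‖Y ω‖₊ ∂P = ∫⁻ ω, ∑' n, (‖Z n ω * W n ω‖₊ : ENNReal) ∂P :=
      lintegral_congr fun ω => hYnorm ω
    _ = ∑' n, ∫⁻ ω, ‖Z n ω * W n ω‖₊ ∂P :=
      lintegral_tsum fun n => ((hZm n).mul (hWm n)).nnnorm.coe_nnreal_ennreal.aemeasurable
  have hYint : Integrable Y P := by
    refine ⟨hYmeas.aestronglyMeasurable, ?_⟩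
    rw [hasFiniteIntegral_def, show ∫⁻ ω, ‖Y ω‖ₑ ∂P = ∫⁻ ω, (‖Y ω‖₊ : ENNReal) ∂P from rfl, hYlint]
    exact lt_of_le_of_ne le_top htsum_ne_top
  refine ⟨hYint, ?_⟩
  -- final computation
  have hint_eq : ∫ ω, Y ω ∂P = ∑' n, ∫ ω, Z n ω * W n ω ∂P := by
    calc ∫ ω, Y ω ∂P = ∫ ω, ∑' n, Z n ω * W n ω ∂P :=
      integral_congr_ae (Filter.Eventually.of_forall hYt)
    _ = ∑' n, ∫ ω, Z n ω * W n ω ∂P :=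
      integral_tsum (fun n => ((hZm n).mul (hWm n)).aestronglyMeasurable) htsum_ne_top
  rw [hint_eq]
  calc ∑' n, ∫ ω, Z n ω * W n ω ∂P = ∑' n : ℕ, q ^ n * (θ * n * p + m) :=
    tsum_congr hFval
  _ = (θ * q + m) / p := hts
  _ = (θ - ∫ x in Set.Icc 0 θ, (μ (Set.Iic x)).toReal) / p := by
    rw [cdf_int hnonneg hθ, ← hp_def, ← hm_def]
    have hnum : θ - (θ * p - m) = θ * q + m := by
      have hq1 : q = 1 - p := by linarith
      rw [hq1]
      ring
    rw [hnum]
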